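/- Soundness of the behavioural congruence axioms for finite instruction sequences: for all closed repetition-free PGA terms t and t', if t = t' is derivable from axiom PGA1 together with the repetition-free control-flow axioms among PGA5–PGA6 and PGA9–PGA25, then t ≅ t', i.e., for all l, n ∈ ℕ the thread extracted from #l ; t ; !ⁿ equals the thread extracted from #l ; t' ; !ⁿ. -/

import Mathlib

/-- Primitive instructions over a set `A` of basic instructions: plain
basic instructions, positive and negative tests, forward jumps, and the
termination instruction. -/
inductive PInstr (A : Type) where
  | basic : A → PInstr A
  | ptst : A → PInstr A
  | ntst : A → PInstr A
  | jmp : ℕ → PInstr A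
  | halt : PInstr A

/-- Closed BTA terms over basic actions `A`: inaction `D`, termination `S`,
and postconditional composition. -/
inductive BTA (A : Type) where
  | D : BTA A
  | S : BTA A
  | pcc : BTA A → A → BTA A → BTA A

open PInstr BTA

/-- Thread extraction (rules TE1–TE13) as a relation between non-empty
finite instruction sequences (lists of primitive instructions) and closed
BTA terms.  `a ∘ x` is `x ◁ a ▷ x`, i.e. `pcc x a x`. -/
inductive Extract {A : Type} : List (PInstr A) → BTA A → Prop where
  | te1 (a : A) : Extract [basic a] (pcc D a D)
  | te2 (a : A) {X : List (PInstr A)} {x : BTA A} :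
      X ≠ [] → Extract X x → Extract (basic a :: X) (pcc x a x)
  | te3 (a : A) : Extract [ptst a] (pcc D a D)
  | te4 (a : A) {X : List (PInstr A)} {x y : BTA A} :
      X ≠ [] → Extract X x → Extract (jmp 2 :: X) y →
      Extract (ptst a :: X) (pcc x a y)
  | te5 (a : A) : Extract [ntst a] (pcc D a D)
  | te6 (a : A) {X : List (PInstr A)} {x y : BTA A} :
      X ≠ [] → Extract X x → Extract (jmp 2 :: X) y →
      Extract (ntst a :: X) (pcc y a x)
  | te7 (l : ℕ) : Extract [jmp l] D
  | te8 {X : List (PInstr A)} : X ≠ [] → Extract (jmp 0 :: X) D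
  | te9 {X : List (PInstr A)} {x : BTA A} :
      X ≠ [] → Extract X x → Extract (jmp 1 :: X) x
  | te10 (l : ℕ) (u : PInstr A) : Extract [jmp (l + 2), u] D
  | te11 (l : ℕ) (u : PInstr A) {X : List (PInstr A)} {x : BTA A} :
      X ≠ [] → Extract (jmp (l + 1) :: X) x →
      Extract (jmp (l + 2) :: u :: X) x
  | te12 : Extract [(halt : PInstr A)] S
  | te13 {X : List (PInstr A)} : X ≠ [] → Extract (halt :: X) S

/-- Closed repetition-free PGA terms. -/
inductive FTm (A : Type) where
  | ins : PInstr A → FTm A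
  | seq : FTm A → FTm A → FTm A

/-- `cat us t` is the term `u₁ ; ⋯ ; uₖ ; t` (right-associated). -/
def FTm.cat {A : Type} : List (PInstr A) → FTm A → FTm A
  | [], t => t
  | u :: us, t => .seq (.ins u) (FTm.cat us t)

/-- The instruction sequence denoted by a closed repetition-free term. -/
def FTm.flatten {A : Type} : FTm A → List (PInstr A)
  | .ins u => [u]
  | .seq s t => s.flatten ++ t.flatten

/-- Equational derivability from PGA1 together with the repetition-free
control-flow axioms PGA5, PGA6 and PGA9–PGA25 (excluding the repetition
axioms PGA17, PGA18). -/
inductive DerivF {A : Type} : FTm A → FTm A → Prop where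
  | refl (t) : DerivF t t
  | symm {t t'} : DerivF t t' → DerivF t' t
  | trans {t t' t''} : DerivF t t' → DerivF t' t'' → DerivF t t''
  | seqCongr {s s' t t'} : DerivF s s' → DerivF t t' →
      DerivF (.seq s t) (.seq s' t')
  | pga1 (x y z) : DerivF (.seq (.seq x y) z) (.seq x (.seq y z))
  | pga5 (us : List (PInstr A)) :
      DerivF (.cat (jmp (us.length + 1) :: us) (.ins (jmp 0)))
        (.cat (jmp 0 :: us) (.ins (jmp 0)))
  | pga6 (us : List (PInstr A)) (l : ℕ) :
      DerivF (.cat (jmp (us.length + 1) :: us) (.ins (jmp l)))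
        (.cat (jmp (l + us.length + 1) :: us) (.ins (jmp l)))
  | pga9 (a : A) :
      DerivF (.cat [ptst a, jmp 0] (.ins (jmp 0)))
        (.cat [basic a, jmp 0] (.ins (jmp 0)))
  | pga10 (a : A) :
      DerivF (.cat [ntst a, jmp 0] (.ins (jmp 0)))
        (.cat [basic a, jmp 0] (.ins (jmp 0)))
  | pga11 (a : A) :
      DerivF (.seq (.ins (ptst a)) (.ins (jmp 1)))
        (.seq (.ins (basic a)) (.ins (jmp 1)))
  | pga12 (a : A) :
      DerivF (.seq (.ins (ntst a)) (.ins (jmp 1)))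
        (.seq (.ins (basic a)) (.ins (jmp 1)))
  | pga13 (a : A) (l : ℕ) :
      DerivF (.cat [ptst a, jmp (l + 2)] (.ins (jmp (l + 1))))
        (.cat [basic a, jmp (l + 2)] (.ins (jmp (l + 1))))
  | pga14 (a : A) (l : ℕ) :
      DerivF (.cat [ntst a, jmp (l + 2)] (.ins (jmp (l + 1))))
        (.cat [basic a, jmp (l + 2)] (.ins (jmp (l + 1))))
  | pga15 (a : A) :
      DerivF (.cat [ptst a, halt] (.ins halt))
        (.cat [basic a, halt] (.ins halt))
  | pga16 (a : A) :
      DerivF (.cat [ntst a, halt] (.ins halt))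
        (.cat [basic a, halt] (.ins halt))
  | pga19 (a : A) (us : List (PInstr A)) :
      DerivF
        (.cat (jmp (us.length + 3) :: jmp (us.length + 3) ::
          jmp (us.length + 3) :: us) (.ins (ptst a)))
        (.cat (ptst a :: jmp (us.length + 3) :: jmp (us.length + 3) :: us)
          (.ins (ptst a)))
  | pga20 (a : A) (us : List (PInstr A)) :
      DerivF
        (.cat (jmp (us.length + 3) :: jmp (us.length + 3) ::
          jmp (us.length + 3) :: us) (.ins (ntst a)))
        (.cat (ntst a :: jmp (us.length + 3) :: jmp (us.length + 3) :: us)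
          (.ins (ntst a)))
  | pga21 (a : A) (us : List (PInstr A)) :
      DerivF
        (.cat (jmp (us.length + 2) :: jmp (us.length + 2) :: us)
          (.ins (basic a)))
        (.cat (basic a :: jmp (us.length + 2) :: us) (.ins (basic a)))
  | pga22 (a : A) (us vs : List (PInstr A)) :
      DerivF
        (.cat (jmp (us.length + vs.length + 4) :: us ++
          [ptst a, jmp (vs.length + 3), jmp (vs.length + 3)] ++ vs)
          (.ins (ptst a)))
        (.cat (jmp (us.length + 1) :: us ++
          [ptst a, jmp (vs.length + 3), jmp (vs.length + 3)] ++ vs)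
          (.ins (ptst a)))
  | pga23 (a : A) (us vs : List (PInstr A)) :
      DerivF
        (.cat (jmp (us.length + vs.length + 4) :: us ++
          [ntst a, jmp (vs.length + 3), jmp (vs.length + 3)] ++ vs)
          (.ins (ntst a)))
        (.cat (jmp (us.length + 1) :: us ++
          [ntst a, jmp (vs.length + 3), jmp (vs.length + 3)] ++ vs)
          (.ins (ntst a)))
  | pga24 (a : A) (us vs : List (PInstr A)) :
      DerivF
        (.cat (jmp (us.length + vs.length + 3) :: us ++
          [basic a, jmp (vs.length + 2)] ++ vs) (.ins (basic a)))
        (.cat (jmp (us.length + 1) :: us ++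
          [basic a, jmp (vs.length + 2)] ++ vs) (.ins (basic a)))
  | pga25 (us : List (PInstr A)) :
      DerivF (.cat (jmp (us.length + 1) :: us) (.ins halt))
        (.cat (halt :: us) (.ins halt))

/-- Behavioural equivalence of finite instruction sequences. -/
def BEqL {A : Type} (s s' : List (PInstr A)) : Prop :=
  ∃ b : BTA A, Extract s b ∧ Extract s' b
section Soundness

variable {A : Type}

/-- Fuel-based behaviour of a finite instruction sequence at a position. -/
def behF : ℕ → List (PInstr A) → ℕ → BTA A
  | 0, _, _ => .D
  | f+1, X, i =>
    match X[i]? with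
    | some (.basic a) => .pcc (behF f X (i+1)) a (behF f X (i+1))
    | some (.ptst a) => .pcc (behF f X (i+1)) a (behF f X (i+2))
    | some (.ntst a) => .pcc (behF f X (i+2)) a (behF f X (i+1))
    | some (.jmp 0) => .D
    | some (.jmp (l+1)) => behF f X (i+l+1)
    | some .halt => .S
    | none => .D

lemma behF_at_none {f : ℕ} {X : List (PInstr A)} {i : ℕ}
    (h : X[i]? = none) : behF (f+1) X i = .D := by
  rw [behF, h]

lemma behF_at_basic {f : ℕ} {X : List (PInstr A)} {i : ℕ} {a : A}
    (h : X[i]? = some (basic a)) :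
    behF (f+1) X i = .pcc (behF f X (i+1)) a (behF f X (i+1)) := by
  rw [behF, h]

lemma behF_at_ptst {f : ℕ} {X : List (PInstr A)} {i : ℕ} {a : A}
    (h : X[i]? = some (ptst a)) :
    behF (f+1) X i = .pcc (behF f X (i+1)) a (behF f X (i+2)) := by
  rw [behF, h]

lemma behF_at_ntst {f : ℕ} {X : List (PInstr A)} {i : ℕ} {a : A}
    (h : X[i]? = some (ntst a)) :
    behF (f+1) X i = .pcc (behF f X (i+2)) a (behF f X (i+1)) := by
  rw [behF, h]

lemma behF_at_jmp0 {f : ℕ} {X : List (PInstr A)} {i : ℕ}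
    (h : X[i]? = some (jmp 0)) : behF (f+1) X i = .D := by
  rw [behF, h]

lemma behF_at_jmpS {f : ℕ} {X : List (PInstr A)} {i l : ℕ}
    (h : X[i]? = some (jmp (l+1))) : behF (f+1) X i = behF f X (i+l+1) := by
  rw [behF, h]

lemma behF_at_halt {f : ℕ} {X : List (PInstr A)} {i : ℕ}
    (h : X[i]? = some halt) : behF (f+1) X i = .S := by
  rw [behF, h]

lemma behF_oob (f : ℕ) (X : List (PInstr A)) (i : ℕ) (h : X.length ≤ i) :
    behF f X i = .D := by
  cases f with
  | zero => rfl
  | succ f => exact behF_at_none (List.getElem?_eq_none h)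

lemma behF_stable : ∀ (f f' : ℕ) (X : List (PInstr A)) (i : ℕ),
    X.length ≤ f + i → X.length ≤ f' + i → behF f X i = behF f' X i := by
  intro f
  induction f with
  | zero =>
    intro f' X i h1 h2
    rw [behF_oob _ _ _ (by omega), behF_oob _ _ _ (by omega)]
  | succ f ih =>
    intro f' X i h1 h2
    by_cases hlt : X.length ≤ i
    · rw [behF_oob _ _ _ hlt, behF_oob _ _ _ hlt]
    · obtain ⟨f'', rfl⟩ : ∃ f'', f' = f'' + 1 := ⟨f' - 1, by omega⟩
      cases hg : X[i]? with
      | none => rw [behF_at_none hg, behF_at_none hg]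
      | some u =>
        cases u with
        | basic a =>
            rw [behF_at_basic hg, behF_at_basic hg,
              ih f'' X (i+1) (by omega) (by omega)]
        | ptst a =>
            rw [behF_at_ptst hg, behF_at_ptst hg,
              ih f'' X (i+1) (by omega) (by omega),
              ih f'' X (i+2) (by omega) (by omega)]
        | ntst a =>
            rw [behF_at_ntst hg, behF_at_ntst hg,
              ih f'' X (i+1) (by omega) (by omega),
              ih f'' X (i+2) (by omega) (by omega)]
        | jmp l =>
            cases l with
            | zero => rw [behF_at_jmp0 hg, behF_at_jmp0 hg]
            | succ l =>
                rw [behF_at_jmpS hg, behF_at_jmpS hg,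
                  ih f'' X (i+l+1) (by omega) (by omega)]
        | halt => rw [behF_at_halt hg, behF_at_halt hg]

/-- Canonical behaviour. -/
def G (X : List (PInstr A)) (i : ℕ) : BTA A := behF X.length X i

lemma G_oob (X : List (PInstr A)) (i : ℕ) (h : X.length ≤ i) : G X i = .D :=
  behF_oob _ _ _ h

lemma behF_append : ∀ (f : ℕ) (P Z : List (PInstr A)) (i : ℕ),
    behF f (P ++ Z) (P.length + i) = behF f Z i := by
  intro f
  induction f with
  | zero => intro P Z i; rfl
  | succ f ih =>
    intro P Z i
    have heq : (P ++ Z)[P.length + i]? = Z[i]? := by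
      rw [List.getElem?_append_right (by omega), Nat.add_sub_cancel_left]
    cases hg : Z[i]? with
    | none =>
        have hz : Z.length ≤ i := by
          by_contra hc
          rw [List.getElem?_eq_getElem (by omega)] at hg
          cases hg
        rw [behF_oob _ _ _ (by simp; omega), behF_oob _ _ _ hz]
    | some u =>
      cases u with
      | basic a =>
          rw [behF_at_basic (heq.trans hg), behF_at_basic hg,
            show P.length + i + 1 = P.length + (i+1) by omega, ih]
      | ptst a =>
          rw [behF_at_ptst (heq.trans hg), behF_at_ptst hg,
            show P.length + i + 1 = P.length + (i+1) by omega,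
            show P.length + i + 2 = P.length + (i+2) by omega, ih, ih]
      | ntst a =>
          rw [behF_at_ntst (heq.trans hg), behF_at_ntst hg,
            show P.length + i + 1 = P.length + (i+1) by omega,
            show P.length + i + 2 = P.length + (i+2) by omega, ih, ih]
      | jmp l =>
          cases l with
          | zero => rw [behF_at_jmp0 (heq.trans hg), behF_at_jmp0 hg]
          | succ l =>
              rw [behF_at_jmpS (heq.trans hg), behF_at_jmpS hg,
                show P.length + i + l + 1 = P.length + (i+l+1) by omega, ih]
      | halt => rw [behF_at_halt (heq.trans hg), behF_at_halt hg]

lemma G_suffix (P Z : List (PInstr A)) (i : ℕ) :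
    G (P ++ Z) (P.length + i) = G Z i := by
  unfold G
  rw [behF_append]
  exact behF_stable _ _ _ _ (by simp; omega) (by omega)

lemma G_cons_succ (u : PInstr A) (Z : List (PInstr A)) (i : ℕ) :
    G (u :: Z) (i + 1) = G Z i := by
  have h := G_suffix [u] Z i
  simp only [List.singleton_append, List.length_singleton] at h
  rwa [Nat.add_comm] at h

lemma G_skip (us Z : List (PInstr A)) (c : ℕ) :
    G (us ++ Z) (us.length + c) = G Z c := G_suffix us Z c

lemma G_skip0 (us Z : List (PInstr A)) :
    G (us ++ Z) us.length = G Z 0 := by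
  simpa using G_suffix us Z 0

lemma G_at_lt {X : List (PInstr A)} {i : ℕ} {u : PInstr A}
    (h : X[i]? = some u) : i < X.length := by
  by_contra hc
  rw [List.getElem?_eq_none (by omega)] at h
  cases h

lemma G_at_basic {X : List (PInstr A)} {i : ℕ} {a : A}
    (h : X[i]? = some (basic a)) :
    G X i = .pcc (G X (i+1)) a (G X (i+1)) := by
  have hi := G_at_lt h
  obtain ⟨f, hf⟩ : ∃ f, X.length = f + 1 := ⟨X.length - 1, by omega⟩
  unfold G
  rw [hf, behF_at_basic h, behF_stable f (f+1) X (i+1) (by omega) (by omega)]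

lemma G_at_ptst {X : List (PInstr A)} {i : ℕ} {a : A}
    (h : X[i]? = some (ptst a)) :
    G X i = .pcc (G X (i+1)) a (G X (i+2)) := by
  have hi := G_at_lt h
  obtain ⟨f, hf⟩ : ∃ f, X.length = f + 1 := ⟨X.length - 1, by omega⟩
  unfold G
  rw [hf, behF_at_ptst h, behF_stable f (f+1) X (i+1) (by omega) (by omega),
    behF_stable f (f+1) X (i+2) (by omega) (by omega)]

lemma G_at_ntst {X : List (PInstr A)} {i : ℕ} {a : A}
    (h : X[i]? = some (ntst a)) :
    G X i = .pcc (G X (i+2)) a (G X (i+1)) := by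
  have hi := G_at_lt h
  obtain ⟨f, hf⟩ : ∃ f, X.length = f + 1 := ⟨X.length - 1, by omega⟩
  unfold G
  rw [hf, behF_at_ntst h, behF_stable f (f+1) X (i+1) (by omega) (by omega),
    behF_stable f (f+1) X (i+2) (by omega) (by omega)]

lemma G_at_jmp0 {X : List (PInstr A)} {i : ℕ}
    (h : X[i]? = some (jmp 0)) : G X i = .D := by
  have hi := G_at_lt h
  obtain ⟨f, hf⟩ : ∃ f, X.length = f + 1 := ⟨X.length - 1, by omega⟩
  unfold G
  rw [hf, behF_at_jmp0 h]

lemma G_at_jmpS {X : List (PInstr A)} {i l : ℕ}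
    (h : X[i]? = some (jmp (l+1))) : G X i = G X (i+l+1) := by
  have hi := G_at_lt h
  obtain ⟨f, hf⟩ : ∃ f, X.length = f + 1 := ⟨X.length - 1, by omega⟩
  unfold G
  rw [hf, behF_at_jmpS h]
  exact behF_stable f (f+1) X (i+l+1) (by omega) (by omega)

lemma G_at_halt {X : List (PInstr A)} {i : ℕ}
    (h : X[i]? = some halt) : G X i = .S := by
  have hi := G_at_lt h
  obtain ⟨f, hf⟩ : ∃ f, X.length = f + 1 := ⟨X.length - 1, by omega⟩
  unfold G
  rw [hf, behF_at_halt h]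

lemma getElem?_cons_zero' (u : PInstr A) (Z : List (PInstr A)) :
    (u :: Z)[0]? = some u := by simp

lemma G_basic0 (a : A) (Z : List (PInstr A)) :
    G (basic a :: Z) 0 = .pcc (G Z 0) a (G Z 0) := by
  rw [G_at_basic (getElem?_cons_zero' _ _), G_cons_succ]

lemma G_ptst0 (a : A) (Z : List (PInstr A)) :
    G (ptst a :: Z) 0 = .pcc (G Z 0) a (G Z 1) := by
  rw [G_at_ptst (getElem?_cons_zero' _ _),
    show (0+2 : ℕ) = 1 + 1 by omega, G_cons_succ, G_cons_succ]

lemma G_ntst0 (a : A) (Z : List (PInstr A)) :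
    G (ntst a :: Z) 0 = .pcc (G Z 1) a (G Z 0) := by
  rw [G_at_ntst (getElem?_cons_zero' _ _),
    show (0+2 : ℕ) = 1 + 1 by omega, G_cons_succ, G_cons_succ]

lemma G_jmp00 (Z : List (PInstr A)) : G (jmp 0 :: Z) 0 = .D :=
  G_at_jmp0 (getElem?_cons_zero' _ _)

lemma G_jmpS0 (l : ℕ) (Z : List (PInstr A)) :
    G (jmp (l+1) :: Z) 0 = G Z l := by
  rw [G_at_jmpS (getElem?_cons_zero' _ _),
    show 0 + l + 1 = l + 1 by omega, G_cons_succ]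

lemma G_halt0 (Z : List (PInstr A)) : G (halt :: Z) 0 = .S :=
  G_at_halt (getElem?_cons_zero' _ _)

lemma G_drop (X : List (PInstr A)) (i : ℕ) : G X i = G (X.drop i) 0 := by
  by_cases h : i ≤ X.length
  · have hl : (X.take i).length = i := by simp [List.length_take]; omega
    have h2 := G_suffix (X.take i) (X.drop i) 0
    rw [hl, List.take_append_drop, Nat.add_zero] at h2
    exact h2
  · rw [G_oob _ _ (by omega), List.drop_eq_nil_of_le (by omega),
      G_oob _ _ (by simp)]

end Soundness
section SoundnessExtract

variable {A : Type}

lemma Extract.ne_nil {X : List (PInstr A)} {b : BTA A} (h : Extract X b) :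
    X ≠ [] := by cases h <;> simp

lemma extract_jmp_D : ∀ (l : ℕ) (X : List (PInstr A)), X.length ≤ l →
    Extract (jmp (l+1) :: X) .D := by
  intro l
  induction l with
  | zero =>
    intro X h
    have : X = [] := List.eq_nil_of_length_eq_zero (by omega)
    subst this
    exact .te7 1
  | succ l ih =>
    intro X h
    cases X with
    | nil => exact .te7 (l+2)
    | cons u X' =>
      cases X' with
      | nil => exact .te10 l u
      | cons v X'' =>
        exact .te11 l u (by simp) (ih _ (by simp at h ⊢; omega))

lemma extract_jmp : ∀ (l : ℕ) (X : List (PInstr A)) (b : BTA A),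
    Extract (X.drop l) b → Extract (jmp (l+1) :: X) b := by
  intro l
  induction l with
  | zero => intro X b h; exact .te9 h.ne_nil h
  | succ l ih =>
    intro X b h
    cases X with
    | nil =>
      have := h.ne_nil
      simp at this
    | cons u X' =>
      have h' : Extract (X'.drop l) b := h
      refine .te11 l u ?_ (ih X' b h')
      intro he
      subst he
      exact absurd (by simp) h'.ne_nil

lemma extract_total : ∀ (n : ℕ) (X : List (PInstr A)), X.length ≤ n →
    X ≠ [] → Extract X (G X 0) := by
  intro n
  induction n with
  | zero =>
    intro X h hne
    exact absurd (List.eq_nil_of_length_eq_zero (by omega)) hne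
  | succ n ih =>
    intro X h hne
    match X with
    | basic a :: X' =>
      rw [G_basic0]
      cases hX' : X' with
      | nil =>
        rw [G_oob [] 0 (by simp)]
        exact .te1 a
      | cons v X'' =>
        rw [← hX']
        have hne' : X' ≠ [] := by simp [hX']
        exact .te2 a hne' (ih X' (by simp at h; omega) hne')
    | ptst a :: X' =>
      rw [G_ptst0]
      cases hX' : X' with
      | nil =>
        rw [G_oob [] 0 (by simp), G_oob [] 1 (by simp)]
        exact .te3 a
      | cons v X'' =>
        rw [← hX']
        have hne' : X' ≠ [] := by simp [hX']
        have hx := ih X' (by simp at h; omega) hne'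
        have h1 : G X' 1 = G (X'.drop 1) 0 := G_drop X' 1
        by_cases hd : X'.drop 1 = []
        · rw [h1, hd, G_oob [] 0 (by simp)]
          refine .te4 a hne' hx (extract_jmp_D 1 X' ?_)
          have := (List.length_drop : (X'.drop 1).length = X'.length - 1)
          rw [hd] at this
          simp at this
          omega
        · rw [h1]
          refine .te4 a hne' hx (extract_jmp 1 X' _ ?_)
          refine ih (X'.drop 1) ?_ hd
          have := (List.length_drop : (X'.drop 1).length = X'.length - 1)
          simp at h
          omega
    | ntst a :: X' =>
      rw [G_ntst0]
      cases hX' : X' with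
      | nil =>
        rw [G_oob [] 0 (by simp), G_oob [] 1 (by simp)]
        exact .te5 a
      | cons v X'' =>
        rw [← hX']
        have hne' : X' ≠ [] := by simp [hX']
        have hx := ih X' (by simp at h; omega) hne'
        have h1 : G X' 1 = G (X'.drop 1) 0 := G_drop X' 1
        by_cases hd : X'.drop 1 = []
        · rw [h1, hd, G_oob [] 0 (by simp)]
          refine .te6 a hne' hx (extract_jmp_D 1 X' ?_)
          have := (List.length_drop : (X'.drop 1).length = X'.length - 1)
          rw [hd] at this
          simp at this
          omega
        · rw [h1]
          refine .te6 a hne' hx (extract_jmp 1 X' _ ?_)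
          refine ih (X'.drop 1) ?_ hd
          have := (List.length_drop : (X'.drop 1).length = X'.length - 1)
          simp at h
          omega
    | jmp 0 :: X' =>
      rw [G_jmp00]
      cases hX' : X' with
      | nil => exact .te7 0
      | cons v X'' => exact .te8 (by simp)
    | jmp (l+1) :: X' =>
      rw [G_jmpS0, G_drop X' l]
      by_cases hd : X'.drop l = []
      · rw [hd, G_oob [] 0 (by simp)]
        refine extract_jmp_D l X' ?_
        have := (List.length_drop : (X'.drop l).length = X'.length - l)
        rw [hd] at this
        simp at this
        omega
      · refine extract_jmp l X' _ (ih (X'.drop l) ?_ hd)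
        have := (List.length_drop : (X'.drop l).length = X'.length - l)
        simp at h
        omega
    | PInstr.halt :: X' =>
      rw [G_halt0]
      cases hX' : X' with
      | nil => exact .te12
      | cons v X'' => exact .te13 (by simp)

lemma G_mid {T T' : List (PInstr A)}
    (H : ∀ (Y : List (PInstr A)) (i : ℕ), G (T ++ Y) i = G (T' ++ Y) i) :
    ∀ (d : ℕ) (P Y : List (PInstr A)) (i : ℕ), P.length ≤ d + i →
      G (P ++ (T ++ Y)) i = G (P ++ (T' ++ Y)) i := by
  intro d
  induction d with
  | zero =>
    intro P Y i h
    obtain ⟨j, rfl⟩ : ∃ j, i = P.length + j := ⟨i - P.length, by omega⟩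
    rw [G_suffix, G_suffix, H]
  | succ d ih =>
    intro P Y i h
    by_cases hi : P.length ≤ i
    · obtain ⟨j, rfl⟩ : ∃ j, i = P.length + j := ⟨i - P.length, by omega⟩
      rw [G_suffix, G_suffix, H]
    · push_neg at hi
      obtain ⟨u, hu⟩ : ∃ u, P[i]? = some u :=
        ⟨P[i], List.getElem?_eq_getElem hi⟩
      have hg1 : (P ++ (T ++ Y))[i]? = some u :=
        (List.getElem?_append_left hi).trans hu
      have hg2 : (P ++ (T' ++ Y))[i]? = some u :=
        (List.getElem?_append_left hi).trans hu
      cases u with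
      | basic a =>
          rw [G_at_basic hg1, G_at_basic hg2, ih P Y (i+1) (by omega)]
      | ptst a =>
          rw [G_at_ptst hg1, G_at_ptst hg2, ih P Y (i+1) (by omega),
            ih P Y (i+2) (by omega)]
      | ntst a =>
          rw [G_at_ntst hg1, G_at_ntst hg2, ih P Y (i+1) (by omega),
            ih P Y (i+2) (by omega)]
      | jmp l =>
          cases l with
          | zero => rw [G_at_jmp0 hg1, G_at_jmp0 hg2]
          | succ l =>
              rw [G_at_jmpS hg1, G_at_jmpS hg2, ih P Y (i+l+1) (by omega)]
      | halt => rw [G_at_halt hg1, G_at_halt hg2]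

lemma flatten_cat (us : List (PInstr A)) (t : FTm A) :
    (FTm.cat us t).flatten = us ++ t.flatten := by
  induction us with
  | nil => rfl
  | cons u us ih => simp [FTm.cat, FTm.flatten, ih]

end SoundnessExtract

section GHelpers
variable {A : Type}

lemma G_cons1 (u : PInstr A) (Z : List (PInstr A)) : G (u :: Z) 1 = G Z 0 := by
  simpa using G_cons_succ u Z 0

lemma G_cons2 (u : PInstr A) (Z : List (PInstr A)) : G (u :: Z) 2 = G Z 1 := by
  simpa using G_cons_succ u Z 1

lemma G_jmp10 (Z : List (PInstr A)) : G (jmp 1 :: Z) 0 = G Z 0 := by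
  simpa using G_jmpS0 0 Z

end GHelpers
lemma deriv_G {A : Type} {t t' : FTm A} (h : DerivF t t') :
    ∀ (Y : List (PInstr A)) (i : ℕ), G (t.flatten ++ Y) i = G (t'.flatten ++ Y) i := by
  induction h with
  | refl t => intro Y i; rfl
  | symm _ ih => intro Y i; exact (ih Y i).symm
  | trans _ _ ih1 ih2 => intro Y i; exact (ih1 Y i).trans (ih2 Y i)
  | @seqCongr s s' t t' hs ht ihs iht =>
    intro Y i
    show G ((s.flatten ++ t.flatten) ++ Y) i = G ((s'.flatten ++ t'.flatten) ++ Y) i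
    rw [List.append_assoc, List.append_assoc]
    calc G (s.flatten ++ (t.flatten ++ Y)) i
        = G (s'.flatten ++ (t.flatten ++ Y)) i := ihs _ i
      _ = G (s'.flatten ++ (t'.flatten ++ Y)) i :=
          G_mid iht s'.flatten.length s'.flatten Y i (by omega)
  | pga1 x y z =>
    intro Y i
    show G (((x.flatten ++ y.flatten) ++ z.flatten) ++ Y) i
        = G ((x.flatten ++ (y.flatten ++ z.flatten)) ++ Y) i
    simp only [List.append_assoc]
  | pga5 us =>
    intro Y i
    simp only [flatten_cat, FTm.flatten, List.cons_append, List.append_assoc,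
      List.singleton_append, List.nil_append, List.append_eq]
    cases i with
    | zero => rw [G_jmpS0, G_jmp00, G_skip0, G_jmp00]
    | succ i => rw [G_cons_succ, G_cons_succ]
  | pga6 us l =>
    intro Y i
    simp only [flatten_cat, FTm.flatten, List.cons_append, List.append_assoc,
      List.singleton_append, List.nil_append, List.append_eq]
    cases i with
    | zero =>
      cases l with
      | zero => rw [G_jmpS0, G_jmpS0, Nat.zero_add]
      | succ m =>
        conv_lhs => rw [G_jmpS0, G_skip0, G_jmpS0]
        conv_rhs => rw [G_jmpS0,
          show m + 1 + us.length = us.length + (m + 1) by omega, G_skip,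
          G_cons_succ]
    | succ i => rw [G_cons_succ, G_cons_succ]
  | pga9 a =>
    intro Y i
    simp only [flatten_cat, FTm.flatten, List.cons_append, List.append_assoc,
      List.singleton_append, List.nil_append, List.append_eq]
    cases i with
    | zero => rw [G_ptst0, G_basic0, G_jmp00, G_cons1, G_jmp00]
    | succ i => rw [G_cons_succ, G_cons_succ]
  | pga10 a =>
    intro Y i
    simp only [flatten_cat, FTm.flatten, List.cons_append, List.append_assoc,
      List.singleton_append, List.nil_append, List.append_eq]
    cases i with
    | zero => rw [G_ntst0, G_basic0, G_jmp00, G_cons1, G_jmp00]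
    | succ i => rw [G_cons_succ, G_cons_succ]
  | pga11 a =>
    intro Y i
    simp only [FTm.flatten, List.cons_append, List.append_assoc,
      List.singleton_append, List.nil_append, List.append_eq]
    cases i with
    | zero => rw [G_ptst0, G_basic0, G_jmp10, G_cons1]
    | succ i => rw [G_cons_succ, G_cons_succ]
  | pga12 a =>
    intro Y i
    simp only [FTm.flatten, List.cons_append, List.append_assoc,
      List.singleton_append, List.nil_append, List.append_eq]
    cases i with
    | zero => rw [G_ntst0, G_basic0, G_jmp10, G_cons1]
    | succ i => rw [G_cons_succ, G_cons_succ]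
  | pga13 a l =>
    intro Y i
    simp only [flatten_cat, FTm.flatten, List.cons_append, List.append_assoc,
      List.singleton_append, List.nil_append, List.append_eq]
    cases i with
    | zero =>
      rw [G_ptst0, G_basic0, show l + 2 = l + 1 + 1 by omega, G_jmpS0,
        G_cons_succ, G_cons1, G_jmpS0]
    | succ i => rw [G_cons_succ, G_cons_succ]
  | pga14 a l =>
    intro Y i
    simp only [flatten_cat, FTm.flatten, List.cons_append, List.append_assoc,
      List.singleton_append, List.nil_append, List.append_eq]
    cases i with
    | zero =>
      rw [G_ntst0, G_basic0, show l + 2 = l + 1 + 1 by omega, G_cons1,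
        G_jmpS0, G_jmpS0, G_cons_succ]
    | succ i => rw [G_cons_succ, G_cons_succ]
  | pga15 a =>
    intro Y i
    simp only [flatten_cat, FTm.flatten, List.cons_append, List.append_assoc,
      List.singleton_append, List.nil_append, List.append_eq]
    cases i with
    | zero => rw [G_ptst0, G_basic0, G_halt0, G_cons1, G_halt0]
    | succ i => rw [G_cons_succ, G_cons_succ]
  | pga16 a =>
    intro Y i
    simp only [flatten_cat, FTm.flatten, List.cons_append, List.append_assoc,
      List.singleton_append, List.nil_append, List.append_eq]
    cases i with
    | zero => rw [G_ntst0, G_basic0, G_halt0, G_cons1, G_halt0]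
    | succ i => rw [G_cons_succ, G_cons_succ]
  | pga19 a us =>
    intro Y i
    simp only [flatten_cat, FTm.flatten, List.cons_append, List.append_assoc,
      List.singleton_append, List.nil_append, List.append_eq]
    cases i with
    | zero =>
      conv_lhs => rw [show us.length + 3 = us.length + 2 + 1 by omega,
        G_jmpS0, show us.length + 2 = us.length + 1 + 1 by omega,
        G_cons_succ, G_cons_succ, G_skip0, G_ptst0]
      conv_rhs => rw [G_ptst0, show us.length + 3 = us.length + 2 + 1 by omega,
        G_jmpS0, G_cons1, G_jmpS0,
        show us.length + 2 = us.length + 1 + 1 by omega, G_cons_succ,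
        G_skip, G_cons1, show us.length + 1 + 1 = us.length + 2 by omega,
        G_skip, G_cons2]
    | succ i => rw [G_cons_succ, G_cons_succ]
  | pga20 a us =>
    intro Y i
    simp only [flatten_cat, FTm.flatten, List.cons_append, List.append_assoc,
      List.singleton_append, List.nil_append, List.append_eq]
    cases i with
    | zero =>
      conv_lhs => rw [show us.length + 3 = us.length + 2 + 1 by omega,
        G_jmpS0, show us.length + 2 = us.length + 1 + 1 by omega,
        G_cons_succ, G_cons_succ, G_skip0, G_ntst0]
      conv_rhs => rw [G_ntst0, show us.length + 3 = us.length + 2 + 1 by omega,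
        G_jmpS0, G_cons1, G_jmpS0,
        show us.length + 2 = us.length + 1 + 1 by omega, G_cons_succ,
        G_skip, G_cons1, show us.length + 1 + 1 = us.length + 2 by omega,
        G_skip, G_cons2]
    | succ i => rw [G_cons_succ, G_cons_succ]
  | pga21 a us =>
    intro Y i
    simp only [flatten_cat, FTm.flatten, List.cons_append, List.append_assoc,
      List.singleton_append, List.nil_append, List.append_eq]
    cases i with
    | zero =>
      conv_lhs => rw [show us.length + 2 = us.length + 1 + 1 by omega,
        G_jmpS0, G_cons_succ, G_skip0, G_basic0]
      conv_rhs => rw [G_basic0, show us.length + 2 = us.length + 1 + 1 by omega,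
        G_jmpS0, G_skip, G_cons1]
    | succ i => rw [G_cons_succ, G_cons_succ]
  | pga22 a us vs =>
    intro Y i
    simp only [flatten_cat, FTm.flatten, List.cons_append, List.append_assoc,
      List.singleton_append, List.nil_append, List.append_eq]
    cases i with
    | zero =>
      conv_lhs => rw [show us.length + vs.length + 4
          = us.length + (vs.length + 3) + 1 by omega, G_jmpS0, G_skip,
        show vs.length + 3 = vs.length + 1 + 1 + 1 by omega,
        G_cons_succ, G_cons_succ, G_cons_succ, G_skip0, G_ptst0]
      conv_rhs => rw [G_jmpS0, G_skip0, G_ptst0,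
        show vs.length + 3 = vs.length + 2 + 1 by omega, G_jmpS0, G_cons1,
        G_jmpS0, show vs.length + 2 = vs.length + 1 + 1 by omega,
        G_cons_succ, G_skip, G_cons1,
        show vs.length + 1 + 1 = vs.length + 2 by omega, G_skip, G_cons2]
    | succ i => rw [G_cons_succ, G_cons_succ]
  | pga23 a us vs =>
    intro Y i
    simp only [flatten_cat, FTm.flatten, List.cons_append, List.append_assoc,
      List.singleton_append, List.nil_append, List.append_eq]
    cases i with
    | zero =>
      conv_lhs => rw [show us.length + vs.length + 4
          = us.length + (vs.length + 3) + 1 by omega, G_jmpS0, G_skip,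
        show vs.length + 3 = vs.length + 1 + 1 + 1 by omega,
        G_cons_succ, G_cons_succ, G_cons_succ, G_skip0, G_ntst0]
      conv_rhs => rw [G_jmpS0, G_skip0, G_ntst0,
        show vs.length + 3 = vs.length + 2 + 1 by omega, G_jmpS0, G_cons1,
        G_jmpS0, show vs.length + 2 = vs.length + 1 + 1 by omega,
        G_cons_succ, G_skip, G_cons1,
        show vs.length + 1 + 1 = vs.length + 2 by omega, G_skip, G_cons2]
    | succ i => rw [G_cons_succ, G_cons_succ]
  | pga24 a us vs =>
    intro Y i
    simp only [flatten_cat, FTm.flatten, List.cons_append, List.append_assoc,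
      List.singleton_append, List.nil_append, List.append_eq]
    cases i with
    | zero =>
      conv_lhs => rw [show us.length + vs.length + 3
          = us.length + (vs.length + 2) + 1 by omega, G_jmpS0, G_skip,
        show vs.length + 2 = vs.length + 1 + 1 by omega,
        G_cons_succ, G_cons_succ, G_skip0, G_basic0]
      conv_rhs => rw [G_jmpS0, G_skip0, G_basic0,
        show vs.length + 2 = vs.length + 1 + 1 by omega, G_jmpS0,
        G_skip, G_cons1]
    | succ i => rw [G_cons_succ, G_cons_succ]
  | pga25 us =>
    intro Y i
    simp only [flatten_cat, FTm.flatten, List.cons_append, List.append_assoc,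
      List.singleton_append, List.nil_append, List.append_eq]
    cases i with
    | zero => rw [G_jmpS0, G_skip0, G_halt0, G_halt0]
    | succ i => rw [G_cons_succ, G_cons_succ]
theorem derivF_sound {A : Type} {t t' : FTm A} (h : DerivF t t') :
    ∀ l n : ℕ,
      BEqL (jmp l :: (t.flatten ++ List.replicate n halt))
        (jmp l :: (t'.flatten ++ List.replicate n halt)) := by
  intro l n
  have H := deriv_G h (List.replicate n halt)
  have hG : G (jmp l :: (t.flatten ++ List.replicate n halt)) 0
      = G (jmp l :: (t'.flatten ++ List.replicate n halt)) 0 := by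
    cases l with
    | zero => rw [G_jmp00, G_jmp00]
    | succ m => rw [G_jmpS0, G_jmpS0, H m]
  refine ⟨G (jmp l :: (t.flatten ++ List.replicate n halt)) 0,
    extract_total _ _ le_rfl (by simp), ?_⟩
  rw [hG]
  exact extract_total _ _ le_rfl (by simp)
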